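/- arXiv:1503.05977 — 3 statements merged into one kernel-verified Lean document; each statement's English description precedes it below -/
import Mathlib

section
/- Let g ≥ 1 be an integer and consider a sequence of states x⁽⁰⁾, x⁽¹⁾, x⁽²⁾, … ∈ ℝ^g with x⁽⁰⁾ = 0 evolving as follows: at each step t there exist nonnegative reals a₁, …, a_g with a₁ + ⋯ + a_g = 1 and an index j that maximizes x⁽ᵗ⁾ᵢ + aᵢ over all i ∈ {1, …, g}, such that x⁽ᵗ⁺¹⁾_j = 0 and x⁽ᵗ⁺¹⁾ᵢ = x⁽ᵗ⁾ᵢ + aᵢ for every i ≠ j. Then at every time t and for every index i one has x⁽ᵗ⁾ᵢ ≤ 1 + h_{g−1}. -/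
private lemma harmonic_mono' : Monotone harmonic := by
  apply monotone_nat_of_le_succ
  intro n
  rw [harmonic_succ]
  have : (0:ℚ) ≤ (↑(n+1))⁻¹ := by positivity
  linarith

/-- Dietz–Sleator potential lemma: starting from the all-zero vector in ℝ^g,
if at each step nonnegative increments summing to 1 are added to the coordinates
and then a coordinate achieving the maximum value is reset to 0, then every
coordinate stays at most `1 + h_{g-1}` at all times. -/
theorem dietz_sleator (g : ℕ) (hg : 1 ≤ g) (x : ℕ → Fin g → ℝ)
    (h0 : ∀ i, x 0 i = 0)
    (hstep : ∀ t : ℕ, ∃ (a : Fin g → ℝ) (j : Fin g),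
      (∀ i, 0 ≤ a i) ∧ (∑ i, a i) = 1 ∧
      (∀ i, x t i + a i ≤ x t j + a j) ∧
      x (t + 1) j = 0 ∧ (∀ i, i ≠ j → x (t + 1) i = x t i + a i)) :
    ∀ (t : ℕ) (i : Fin g), x t i ≤ 1 + (harmonic (g - 1) : ℝ) := by
  set H : ℝ := (harmonic (g - 1) : ℝ) with hH
  have hH0 : 0 ≤ H := by
    rw [hH]
    have h := harmonic_mono' (Nat.zero_le (g-1))
    rw [harmonic_zero] at h
    exact_mod_cast h
  set c : ℕ → ℝ := fun k => k * (1 + H) - k * (harmonic k : ℝ) with hc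
  -- harmonic k ≤ H for k ≤ g - 1
  have hle : ∀ k : ℕ, k ≤ g - 1 → ((harmonic k : ℝ)) ≤ H := by
    intro k hk
    rw [hH]
    exact_mod_cast harmonic_mono' hk
  -- key identity : k * (c (k+1) + 1) = (k+1) * c k
  have hid : ∀ k : ℕ, (k : ℝ) * (c (k+1) + 1) = ((k:ℝ)+1) * c k := by
    intro k
    have hs : ((harmonic (k+1) : ℝ)) = (harmonic k : ℝ) + ((k:ℝ)+1)⁻¹ := by
      rw [harmonic_succ]; push_cast; ring
    simp only [hc, hs]
    have hne : ((k:ℝ)+1) ≠ 0 := by positivity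
    push_cast
    field_simp
    ring
  -- monotonicity : c k ≤ c (k+1) for k ≤ g-1
  have hmono : ∀ k : ℕ, k ≤ g - 1 → c k ≤ c (k+1) := by
    intro k hk
    have hs : ((harmonic (k+1) : ℝ)) = (harmonic k : ℝ) + ((k:ℝ)+1)⁻¹ := by
      rw [harmonic_succ]; push_cast; ring
    have h1 := hle k hk
    simp only [hc, hs]
    push_cast
    have hne : ((k:ℝ)+1) ≠ 0 := by positivity
    have : ((k:ℝ)+1) * ((k:ℝ)+1)⁻¹ = 1 := mul_inv_cancel₀ hne
    nlinarith
  -- nonnegativity : 0 ≤ c k for k ≤ g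
  have hnn : ∀ k : ℕ, k ≤ g → 0 ≤ c k := by
    intro k hk
    induction k with
    | zero => simp [hc]
    | succ m ih =>
      have hm : m ≤ g - 1 := by omega
      have := hmono m hm
      have := ih (by omega)
      linarith
  have key : ∀ t (S : Finset (Fin g)), ∑ i ∈ S, x t i ≤ c S.card := by
    intro t
    induction t with
    | zero =>
      intro S
      have : ∑ i ∈ S, x 0 i = 0 := by
        apply Finset.sum_eq_zero; intro i _; exact h0 i
      rw [this]
      exact hnn S.card (by simpa using Finset.card_le_card (Finset.subset_univ S))
    | succ t ih =>
      obtain ⟨a, j, ha0, hasum, hmax, hj0, hother⟩ := hstep t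
      -- core : for T not containing j, sum of (x t + a) over T is ≤ c T.card
      have core : ∀ T : Finset (Fin g), j ∉ T →
          ∑ i ∈ T, (x t i + a i) ≤ c T.card := by
        intro T hjT
        set n : ℕ := T.card with hn
        set Y : ℝ := ∑ i ∈ insert j T, (x t i + a i) with hY
        have hcard : (insert j T).card = n + 1 := Finset.card_insert_of_notMem hjT
        have hng : n + 1 ≤ g := by
          rw [← hcard]
          simpa using Finset.card_le_card (Finset.subset_univ (insert j T))
        -- Y ≤ c (n+1) + 1
        have hY1 : Y ≤ c (n+1) + 1 := by
          have h1 : ∑ i ∈ insert j T, x t i ≤ c (n+1) := by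
            have := ih (insert j T); rwa [hcard] at this
          have h2 : ∑ i ∈ insert j T, a i ≤ 1 := by
            rw [← hasum]
            exact Finset.sum_le_sum_of_subset_of_nonneg (Finset.subset_univ _)
              (fun i _ _ => ha0 i)
          rw [hY, Finset.sum_add_distrib]
          linarith
        -- (n+1) * M ≥ Y where M = x t j + a j
        have hM : Y ≤ ((n:ℝ)+1) * (x t j + a j) := by
          calc Y ≤ ∑ _i ∈ insert j T, (x t j + a j) :=
                Finset.sum_le_sum (fun i _ => hmax i)
            _ = ((n:ℝ)+1) * (x t j + a j) := by
                rw [Finset.sum_const, hcard]; push_cast; ring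
        have hsplit : Y = (x t j + a j) + ∑ i ∈ T, (x t i + a i) := by
          rw [hY, Finset.sum_insert hjT]
        have hid' := hid n
        have hmul : (n:ℝ) * Y ≤ (n:ℝ) * (c (n+1) + 1) :=
          mul_le_mul_of_nonneg_left hY1 (by positivity)
        -- (n+1)(Y - M) ≤ n Y ≤ n (c(n+1)+1) = (n+1) c n
        have hpos : (0:ℝ) < (n:ℝ) + 1 := by positivity
        nlinarith [hmax j]
      intro S
      by_cases hjS : j ∈ S
      · have hsplit : ∑ i ∈ S, x (t+1) i = ∑ i ∈ S.erase j, x (t+1) i := by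
          rw [← Finset.add_sum_erase S _ hjS, hj0, zero_add]
        have heq : ∑ i ∈ S.erase j, x (t+1) i = ∑ i ∈ S.erase j, (x t i + a i) := by
          apply Finset.sum_congr rfl
          intro i hi
          exact hother i (Finset.ne_of_mem_erase hi)
        have h1 : ∑ i ∈ S.erase j, (x t i + a i) ≤ c (S.erase j).card :=
          core _ (Finset.notMem_erase j S)
        have hcard : (S.erase j).card = S.card - 1 := Finset.card_erase_of_mem hjS
        have hS1 : 1 ≤ S.card := Finset.card_pos.mpr ⟨j, hjS⟩
        have hSg : S.card ≤ g := by simpa using Finset.card_le_card (Finset.subset_univ S)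
        have h2 : c (S.card - 1) ≤ c S.card := by
          have := hmono (S.card - 1) (by omega)
          have he : S.card - 1 + 1 = S.card := by omega
          rwa [he] at this
        rw [hsplit, heq]
        rw [hcard] at h1
        linarith
      · have heq : ∑ i ∈ S, x (t+1) i = ∑ i ∈ S, (x t i + a i) := by
          apply Finset.sum_congr rfl
          intro i hi
          exact hother i (fun h => hjS (h ▸ hi))
        rw [heq]
        exact core S hjS
  intro t i
  have h1 := key t {i}
  simp only [Finset.sum_singleton, Finset.card_singleton] at h1
  have hc1 : c 1 = H := by
    simp [hc, harmonic_succ]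
  rw [hc1] at h1
  linarith
end

section
/- Let I and A be nonempty finite sets with |A| = σ. For each i ∈ I and a ∈ A, let f'_{a,i} and f_{a,i} be reals with 0 < f'_{a,i} ≤ f_{a,i}, and set n_i = Σ_{a∈A} f_{a,i} and n'_i = Σ_{a∈A} f'_{a,i}. Then Σ_{i∈I} Σ_{a∈A} f'_{a,i}·ln(n_i / f_{a,i}) ≤ Σ_{i∈I} n'_i·ln(n_i / n'_i) + (Σ_{i∈I} n'_i)·ln σ. -/
lemma deleted_space_bound_aux {A : Type*} [Fintype A] [Nonempty A]
    (g h : A → ℝ) (hg : ∀ a, 0 < g a) (hgh : ∀ a, g a ≤ h a) :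
    ∑ a, g a * Real.log ((∑ b, h b) / h a) ≤
      (∑ b, g b) * Real.log ((∑ b, h b) / (∑ b, g b)) +
      (∑ b, g b) * Real.log (Fintype.card A) := by
  set n : ℝ := ∑ b, h b with hn
  set n' : ℝ := ∑ b, g b with hn'
  have hh : ∀ a, 0 < h a := fun a => lt_of_lt_of_le (hg a) (hgh a)
  have hn'pos : 0 < n' := Finset.sum_pos (fun a _ => hg a) Finset.univ_nonempty
  have hnpos : 0 < n := Finset.sum_pos (fun a _ => hh a) Finset.univ_nonempty
  -- decomposition
  have decomp : ∑ a, g a * Real.log (n / h a)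
      = n' * (Real.log n - Real.log n')
        + (∑ a, g a * (Real.log n' - Real.log (g a)))
        + (∑ a, g a * (Real.log (g a) - Real.log (h a))) := by
    have e1 : ∀ a : A, g a * Real.log (n / h a)
        = g a * (Real.log n - Real.log n') + g a * (Real.log n' - Real.log (g a))
          + g a * (Real.log (g a) - Real.log (h a)) := fun a => by
      rw [Real.log_div hnpos.ne' (hh a).ne']; ring
    rw [Finset.sum_congr rfl fun a _ => e1 a, Finset.sum_add_distrib,
      Finset.sum_add_distrib, ← Finset.sum_mul, ← hn']
  -- third term nonpositive
  have third : ∑ a, g a * (Real.log (g a) - Real.log (h a)) ≤ 0 := by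
    apply Finset.sum_nonpos
    intro a _
    have : Real.log (g a) ≤ Real.log (h a) := Real.log_le_log (hg a) (hgh a)
    nlinarith [hg a]
  -- Jensen for second term
  have jensen : ∑ a, (g a / n') * Real.log (n' / g a)
      ≤ Real.log (∑ a, (g a / n') * (n' / g a)) := by
    have := (strictConcaveOn_log_Ioi.concaveOn).le_map_sum
      (t := Finset.univ) (w := fun a => g a / n') (p := fun a => n' / g a)
      (fun a _ => (div_pos (hg a) hn'pos).le)
      (by rw [← Finset.sum_div]; field_simp; exact hn'.symm)
      (fun a _ => Set.mem_Ioi.mpr (div_pos hn'pos (hg a)))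
    simpa using this
  have hsum1 : ∑ a, (g a / n') * (n' / g a) = (Fintype.card A : ℝ) := by
    have e2 : ∀ a : A, (g a / n') * (n' / g a) = 1 := fun a => by
      field_simp
      exact div_self (hg a).ne'
    rw [Finset.sum_congr rfl fun a _ => e2 a]
    simp
  have second : ∑ a, g a * (Real.log n' - Real.log (g a)) ≤ n' * Real.log (Fintype.card A) := by
    have key : ∑ a, g a * (Real.log n' - Real.log (g a))
        = n' * ∑ a, (g a / n') * Real.log (n' / g a) := by
      rw [Finset.mul_sum]
      exact Finset.sum_congr rfl fun a _ => by
        rw [Real.log_div hn'pos.ne' (hg a).ne']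
        field_simp
    rw [key]
    have := jensen
    rw [hsum1] at this
    exact mul_le_mul_of_nonneg_left this hn'pos.le
  rw [decomp, Real.log_div hnpos.ne' hn'pos.ne']
  linarith

/-- Space for the deleted symbols under k-th order entropy coding:
`∑_i ∑_a f'_{a,i}·ln(n_i/f_{a,i}) ≤ ∑_i n'_i·ln(n_i/n'_i) + (∑_i n'_i)·ln σ`. -/
theorem deleted_space_bound {I A : Type*} [Fintype I] [Fintype A]
    [Nonempty I] [Nonempty A]
    (f f' : A → I → ℝ) (hpos : ∀ a i, 0 < f' a i) (hle : ∀ a i, f' a i ≤ f a i) :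
    ∑ i, ∑ a, f' a i * Real.log ((∑ b, f b i) / f a i) ≤
      (∑ i, (∑ b, f' b i) * Real.log ((∑ b, f b i) / (∑ b, f' b i))) +
      (∑ i, ∑ b, f' b i) * Real.log (Fintype.card A) := by
  rw [Finset.sum_mul, ← Finset.sum_add_distrib]
  apply Finset.sum_le_sum
  intro i _
  have := deleted_space_bound_aux (fun a => f' a i) (fun a => f a i)
    (fun a => hpos a i) (fun a => hle a i)
  simpa [Finset.mul_sum, Finset.sum_mul] using this
end

section
/- Let I be a finite set and for each i ∈ I let n_i and n'_i be reals with 0 < n'_i ≤ n_i. Let K₁ ≥ K₂ ≥ e be real thresholds. Then Σ_{i∈I} n'_i·ln(n_i/n'_i) ≤ (ln K₁ / K₁)·Σ_{i∈I} n_i + (ln K₂ / K₂)·Σ_{i∈I} n_i + (ln K₂)·Σ_{i∈I} n'_i. -/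
/-- Three-way partition bound: for `0 < n'_i ≤ n_i` and thresholds `K₁ ≥ K₂ ≥ e`,
`∑ n'_i·ln(n_i/n'_i) ≤ (ln K₁/K₁)·∑ n_i + (ln K₂/K₂)·∑ n_i + (ln K₂)·∑ n'_i`. -/
theorem three_way_partition_bound {I : Type*} [Fintype I] (n n' : I → ℝ)
    (hpos : ∀ i, 0 < n' i) (hle : ∀ i, n' i ≤ n i)
    (K₁ K₂ : ℝ) (hK : K₂ ≤ K₁) (hK₂ : Real.exp 1 ≤ K₂) :
    ∑ i, n' i * Real.log (n i / n' i) ≤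
      (Real.log K₁ / K₁) * (∑ i, n i) + (Real.log K₂ / K₂) * (∑ i, n i) +
      Real.log K₂ * (∑ i, n' i) := by
  have hK₁ : Real.exp 1 ≤ K₁ := hK₂.trans hK
  have he : (1:ℝ) < Real.exp 1 := by
    have := Real.exp_one_gt_d9; linarith
  have hK₂pos : (0:ℝ) < K₂ := lt_of_lt_of_le (by linarith) hK₂
  have hK₁pos : (0:ℝ) < K₁ := lt_of_lt_of_le hK₂pos hK
  have hlogK₂ : (0:ℝ) ≤ Real.log K₂ := Real.log_nonneg (by linarith)
  have hlogK₁ : (0:ℝ) ≤ Real.log K₁ := Real.log_nonneg (by linarith)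
  rw [Finset.mul_sum, Finset.mul_sum, Finset.mul_sum, ← Finset.sum_add_distrib,
    ← Finset.sum_add_distrib]
  apply Finset.sum_le_sum
  intro i _
  set r := n i / n' i with hr
  have hn'pos := hpos i
  have hnpos : 0 < n i := lt_of_lt_of_le hn'pos (hle i)
  have hr1 : 1 ≤ r := (one_le_div hn'pos).mpr (hle i)
  have hrn : n' i * r = n i := by rw [hr]; field_simp [hn'pos.ne']
  have ht1 : 0 ≤ Real.log K₁ / K₁ * n i :=
    mul_nonneg (div_nonneg hlogK₁ hK₁pos.le) hnpos.le
  have ht2 : 0 ≤ Real.log K₂ / K₂ * n i :=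
    mul_nonneg (div_nonneg hlogK₂ hK₂pos.le) hnpos.le
  have ht3 : 0 ≤ Real.log K₂ * n' i := mul_nonneg hlogK₂ hn'pos.le
  rcases lt_or_ge r K₂ with h | h
  · -- small ratio
    have : n' i * Real.log r ≤ Real.log K₂ * n' i := by
      rw [mul_comm (Real.log K₂)]
      exact mul_le_mul_of_nonneg_left (Real.log_le_log (by linarith) h.le) hn'pos.le
    linarith
  · have key : ∀ K : ℝ, Real.exp 1 ≤ K → K ≤ r → n' i * Real.log r ≤ Real.log K / K * n i := by
      intro K hKe hKr
      have : Real.log r / r ≤ Real.log K / K :=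
        Real.log_div_self_antitoneOn (by exact hKe) (by exact hKe.trans hKr) hKr
      have hrpos : 0 < r := lt_of_lt_of_le hK₂pos h
      calc n' i * Real.log r = (Real.log r / r) * (n' i * r) := by
            field_simp
        _ ≤ (Real.log K / K) * (n' i * r) := by
            apply mul_le_mul_of_nonneg_right this
            positivity
        _ = Real.log K / K * n i := by rw [hrn]
    rcases le_or_gt K₁ r with h1 | h1
    · have := key K₁ hK₁ h1; linarith
    · have := key K₂ hK₂ h; linarith
end
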